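/- Let α₁, α₂, α₃, β₁, β₂, β₃, k₊, k₋ be real numbers with W± := α₂ ± β₁, X± := α₂ ± β₃, Y± := β₂ ± α₁, Z± := β₂ ± α₃, (W₋, Z₋) = k₊(−Y₊, X₊), (W₊, Z₊) = k₋(−Y₋, X₋), and suppose that α₁β₂ − α₂β₁ = 0 and α₂β₃ − α₃β₂ = 0. Then X₊²Y₋² − X₋²Y₊² = 0. -/
import Mathlib

theorem stmt_4 (α₁ α₂ α₃ β₁ β₂ β₃ kp km : ℝ)
    (Wp Wm Xp Xm Yp Ym Zp Zm : ℝ)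
    (hWp : Wp = α₂ + β₁) (hWm : Wm = α₂ - β₁)
    (hXp : Xp = α₂ + β₃) (hXm : Xm = α₂ - β₃)
    (hYp : Yp = β₂ + α₁) (hYm : Ym = β₂ - α₁)
    (hZp : Zp = β₂ + α₃) (hZm : Zm = β₂ - α₃)
    (h1 : Wm = kp * (-Yp)) (h2 : Zm = kp * Xp)
    (h3 : Wp = km * (-Ym)) (h4 : Zp = km * Xm)
    (h5 : α₁ * β₂ - α₂ * β₁ = 0) (h6 : α₂ * β₃ - α₃ * β₂ = 0) :
    Xp ^ 2 * Ym ^ 2 - Xm ^ 2 * Yp ^ 2 = 0 := by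
  subst hWp hWm hXp hXm hYp hYm hZp hZm
  by_cases h : α₂ = 0 ∧ β₂ = 0
  · obtain ⟨h7, h8⟩ := h
    subst h7 h8
    ring
  · have hne : α₂ ^ 2 + β₂ ^ 2 ≠ 0 := by
      intro hc
      exact h ⟨by nlinarith [sq_nonneg α₂, sq_nonneg β₂],
               by nlinarith [sq_nonneg α₂, sq_nonneg β₂]⟩
    have hA : α₂ ^ 2 + β₂ ^ 2 - α₁ * α₃ - β₁ * β₃ = 0 := by
      linear_combination (α₂ + β₃) * h1 + (β₂ + α₁) * h2 - h5 - h6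
    have hQ0 : (α₂ * β₂ - α₁ * β₃) * (α₂ ^ 2 + β₂ ^ 2) = 0 := by
      linear_combination α₂ * β₂ * hA - α₁ * α₂ * h6 - β₂ * β₃ * h5
    have hQ : α₂ * β₂ - α₁ * β₃ = 0 :=
      (mul_eq_zero.mp hQ0).resolve_right hne
    linear_combination (4 * (β₂ * β₃ - α₁ * α₂)) * hQ
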